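/- arXiv:2301.07458 — 2 statements merged into one kernel-verified Lean document; each statement's English description precedes it below -/
import Mathlib

section
/- (Steiner's problem, acute case) Let A, B, C ∈ ℝ² be the vertices of a triangle all of whose interior angles are strictly less than 2π/3. Then there exists a unique point P ∈ ℝ² minimizing |AP| + |BP| + |CP|, and at this point each of the three segments PA, PB, PC makes an angle of 2π/3 with the other two. -/
open EuclideanGeometry Real

local notation "⟪" x ", " y "⟫" => @inner ℝ _ _ x y

section helpers

variable {E : Type*} [NormedAddCommGroup E] [InnerProductSpace ℝ E]

private lemma steiner_key_bound (w u : E) (t : ℝ) (hw : w ≠ 0) :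
    ‖w - t • u‖ ≤ ‖w‖ - t * ⟪u, w⟫ / ‖w‖ + t ^ 2 * ‖u‖ ^ 2 / (2 * ‖w‖) := by
  have hr0 : 0 < ‖w‖ := norm_pos_iff.mpr hw
  have hv0 : (0:ℝ) ≤ ‖w - t • u‖ := norm_nonneg _
  have hsq : ‖w - t • u‖ ^ 2 = ‖w‖ ^ 2 - 2 * (t * ⟪u, w⟫) + t ^ 2 * ‖u‖ ^ 2 := by
    rw [norm_sub_sq_real, real_inner_smul_right, real_inner_comm, norm_smul, mul_pow]
    simp [sq_abs]
  have key : ‖w - t • u‖ * (2 * ‖w‖) ≤ 2 * ‖w‖ ^ 2 - 2 * (t * ⟪u, w⟫) + t ^ 2 * ‖u‖ ^ 2 := by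
    nlinarith [sq_nonneg (‖w‖ - ‖w - t • u‖)]
  have heq : ‖w‖ - t * ⟪u, w⟫ / ‖w‖ + t ^ 2 * ‖u‖ ^ 2 / (2 * ‖w‖)
      = (2 * ‖w‖ ^ 2 - 2 * (t * ⟪u, w⟫) + t ^ 2 * ‖u‖ ^ 2) / (2 * ‖w‖) := by
    field_simp
  rw [heq, le_div_iff₀ (by positivity)]
  exact key

private lemma steiner_decrease (X P u : E) (hXP : X ≠ P) (t : ℝ) :
    dist X (P + t • u) ≤
      dist X P - t * ⟪u, X - P⟫ / ‖X - P‖ + t ^ 2 * ‖u‖ ^ 2 / (2 * ‖X - P‖) := by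
  have hw : X - P ≠ 0 := sub_ne_zero.mpr hXP
  have h1 : dist X (P + t • u) = ‖(X - P) - t • u‖ := by
    rw [dist_eq_norm]; congr 1; abel
  rw [h1, dist_eq_norm]
  exact steiner_key_bound (X - P) u t hw

private lemma steiner_pick_t (a k : ℝ) (ha : 0 < a) (hk : 0 ≤ k) :
    ∃ t : ℝ, 0 < t ∧ -(t * a) + t ^ 2 * k < 0 := by
  have hk1 : (0:ℝ) < k + 1 := by linarith
  obtain ⟨t, ht⟩ : ∃ t, a / (k + 1) = t := ⟨_, rfl⟩
  have ht0 : 0 < t := by rw [← ht]; positivity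
  have h1 : t * (k + 1) = a := by rw [← ht]; field_simp
  refine ⟨t, ht0, ?_⟩
  have h2 : -(t * a) + t ^ 2 * k = -(t * t) := by rw [← h1]; ring
  rw [h2]
  nlinarith

end helpers

section main

variable {E : Type*} [NormedAddCommGroup E] [InnerProductSpace ℝ E]

private lemma steiner_not_at_vertex (A B C : E) (hB : B ≠ A) (hC : C ≠ A)
    (h : InnerProductGeometry.angle (B - A) (C - A) < 2 * π / 3) :
    ∃ Q, dist A Q + dist B Q + dist C Q < dist A A + dist B A + dist C A := by
  have hrB0 : 0 < ‖B - A‖ := norm_pos_iff.mpr (sub_ne_zero.mpr hB)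
  have hrC0 : 0 < ‖C - A‖ := norm_pos_iff.mpr (sub_ne_zero.mpr hC)
  obtain ⟨rB, hrB⟩ : ∃ r, ‖B - A‖ = r := ⟨_, rfl⟩
  obtain ⟨rC, hrC⟩ : ∃ r, ‖C - A‖ = r := ⟨_, rfl⟩
  rw [hrB] at hrB0
  rw [hrC] at hrC0
  obtain ⟨vB, hvB⟩ : ∃ v : E, rB⁻¹ • (B - A) = v := ⟨_, rfl⟩
  obtain ⟨vC, hvC⟩ : ∃ v : E, rC⁻¹ • (C - A) = v := ⟨_, rfl⟩
  have hvBn : ‖vB‖ = 1 := by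
    rw [← hvB, norm_smul, norm_inv, Real.norm_eq_abs, abs_of_pos hrB0, hrB,
      inv_mul_cancel₀ hrB0.ne']
  have hvCn : ‖vC‖ = 1 := by
    rw [← hvC, norm_smul, norm_inv, Real.norm_eq_abs, abs_of_pos hrC0, hrC,
      inv_mul_cancel₀ hrC0.ne']
  have hpi : (0:ℝ) < π := Real.pi_pos
  have hcosval : Real.cos (2 * π / 3) = -(1/2) := by
    have h23 : (2 * π / 3 : ℝ) = π - π / 3 := by ring
    rw [h23, Real.cos_pi_sub, Real.cos_pi_div_three]
  have hcoslt : -(1/2) < Real.cos (InnerProductGeometry.angle (B - A) (C - A)) := by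
    rw [← hcosval]
    exact Real.strictAntiOn_cos
      ⟨InnerProductGeometry.angle_nonneg _ _, InnerProductGeometry.angle_le_pi _ _⟩
      ⟨by positivity, by linarith⟩ h
  have hip : -(1/2) < ⟪vB, vC⟫ := by
    have hca := InnerProductGeometry.cos_angle (B - A) (C - A)
    have hvv : ⟪vB, vC⟫ = ⟪B - A, C - A⟫ / (‖B - A‖ * ‖C - A‖) := by
      rw [← hvB, ← hvC, real_inner_smul_left, real_inner_smul_right, hrB, hrC]
      field_simp
    rw [hvv, ← hca]
    exact hcoslt
  obtain ⟨u, hu⟩ : ∃ v : E, vB + vC = v := ⟨_, rfl⟩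
  have hun : ‖u‖ ^ 2 = 2 + 2 * ⟪vB, vC⟫ := by
    rw [← hu, norm_add_sq_real, hvBn, hvCn]; ring
  have hu1 : 1 < ‖u‖ := by
    nlinarith [norm_nonneg u]
  have hu0 : (0:ℝ) < ‖u‖ := lt_trans one_pos hu1
  have hipB : ⟪u, B - A⟫ / rB = ⟪u, vB⟫ := by
    rw [← hvB, real_inner_smul_right]; field_simp
  have hipC : ⟪u, C - A⟫ / rC = ⟪u, vC⟫ := by
    rw [← hvC, real_inner_smul_right]; field_simp
  have hsumip : ⟪u, vB⟫ + ⟪u, vC⟫ = ‖u‖ ^ 2 := by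
    rw [← inner_add_right, hu, real_inner_self_eq_norm_sq]
  obtain ⟨t, ht0, htneg⟩ := steiner_pick_t (‖u‖ ^ 2 - ‖u‖)
      (‖u‖ ^ 2 / (2 * rB) + ‖u‖ ^ 2 / (2 * rC)) (by nlinarith) (by positivity)
  refine ⟨A + t • u, ?_⟩
  have hdA : dist A (A + t • u) = t * ‖u‖ := by
    rw [dist_eq_norm]
    have h2 : A - (A + t • u) = -(t • u) := by abel
    rw [h2, norm_neg, norm_smul, Real.norm_eq_abs, abs_of_pos ht0]
  have hdB := steiner_decrease B A u hB t
  have hdC := steiner_decrease C A u hC t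
  rw [hrB] at hdB
  rw [hrC] at hdC
  have expB : t * ⟪u, B - A⟫ / rB = t * ⟪u, vB⟫ := by rw [mul_div_assoc, hipB]
  have expC : t * ⟪u, C - A⟫ / rC = t * ⟪u, vC⟫ := by rw [mul_div_assoc, hipC]
  rw [expB] at hdB
  rw [expC] at hdC
  have hAA : dist A A = 0 := dist_self A
  have hmain : t * ‖u‖ - (t * ⟪u, vB⟫ + t * ⟪u, vC⟫)
      + (t ^ 2 * ‖u‖ ^ 2 / (2 * rB) + t ^ 2 * ‖u‖ ^ 2 / (2 * rC)) < 0 := by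
    have e1 : t * ⟪u, vB⟫ + t * ⟪u, vC⟫ = t * ‖u‖ ^ 2 := by
      rw [← mul_add, hsumip]
    have e2 : t ^ 2 * ‖u‖ ^ 2 / (2 * rB) + t ^ 2 * ‖u‖ ^ 2 / (2 * rC)
        = t ^ 2 * (‖u‖ ^ 2 / (2 * rB) + ‖u‖ ^ 2 / (2 * rC)) := by ring
    rw [e1, e2]
    have : t * ‖u‖ - t * ‖u‖ ^ 2 = -(t * (‖u‖ ^ 2 - ‖u‖)) := by ring
    linarith [htneg, this.ge, this.le]
  rw [hAA]
  have hsum := add_le_add (add_le_add hdA.le hdB) hdC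
  linarith

private lemma steiner_grad_zero (A B C P : E) (hA : A ≠ P) (hB : B ≠ P) (hC : C ≠ P)
    (hmin : ∀ Q, dist A P + dist B P + dist C P ≤ dist A Q + dist B Q + dist C Q)
    (hs : ‖A - P‖⁻¹ • (A - P) + ‖B - P‖⁻¹ • (B - P) + ‖C - P‖⁻¹ • (C - P) ≠ 0) :
    False := by
  have hrA0 : 0 < ‖A - P‖ := norm_pos_iff.mpr (sub_ne_zero.mpr hA)
  have hrB0 : 0 < ‖B - P‖ := norm_pos_iff.mpr (sub_ne_zero.mpr hB)
  have hrC0 : 0 < ‖C - P‖ := norm_pos_iff.mpr (sub_ne_zero.mpr hC)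
  obtain ⟨vA, hvA⟩ : ∃ v : E, ‖A - P‖⁻¹ • (A - P) = v := ⟨_, rfl⟩
  obtain ⟨vB, hvB⟩ : ∃ v : E, ‖B - P‖⁻¹ • (B - P) = v := ⟨_, rfl⟩
  obtain ⟨vC, hvC⟩ : ∃ v : E, ‖C - P‖⁻¹ • (C - P) = v := ⟨_, rfl⟩
  rw [hvA, hvB, hvC] at hs
  obtain ⟨u, hu⟩ : ∃ v : E, vA + vB + vC = v := ⟨_, rfl⟩
  rw [hu] at hs
  have hun : 0 < ‖u‖ ^ 2 := pow_pos (norm_pos_iff.mpr hs) 2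
  have hsumip : ⟪u, vA⟫ + ⟪u, vB⟫ + ⟪u, vC⟫ = ‖u‖ ^ 2 := by
    rw [← inner_add_right, ← inner_add_right, hu, real_inner_self_eq_norm_sq]
  obtain ⟨t, ht0, htneg⟩ := steiner_pick_t (‖u‖ ^ 2)
      (‖u‖ ^ 2 / (2 * ‖A - P‖) + ‖u‖ ^ 2 / (2 * ‖B - P‖) + ‖u‖ ^ 2 / (2 * ‖C - P‖))
      hun (by positivity)
  have hdA := steiner_decrease A P u hA t
  have hdB := steiner_decrease B P u hB t
  have hdC := steiner_decrease C P u hC t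
  have expA : t * ⟪u, A - P⟫ / ‖A - P‖ = t * ⟪u, vA⟫ := by
    rw [mul_div_assoc, ← hvA, real_inner_smul_right]; field_simp
  have expB : t * ⟪u, B - P⟫ / ‖B - P‖ = t * ⟪u, vB⟫ := by
    rw [mul_div_assoc, ← hvB, real_inner_smul_right]; field_simp
  have expC : t * ⟪u, C - P⟫ / ‖C - P‖ = t * ⟪u, vC⟫ := by
    rw [mul_div_assoc, ← hvC, real_inner_smul_right]; field_simp
  rw [expA] at hdA
  rw [expB] at hdB
  rw [expC] at hdC
  have hmain : -(t * ⟪u, vA⟫ + t * ⟪u, vB⟫ + t * ⟪u, vC⟫)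
      + (t ^ 2 * ‖u‖ ^ 2 / (2 * ‖A - P‖) + t ^ 2 * ‖u‖ ^ 2 / (2 * ‖B - P‖)
        + t ^ 2 * ‖u‖ ^ 2 / (2 * ‖C - P‖)) < 0 := by
    have e1 : t * ⟪u, vA⟫ + t * ⟪u, vB⟫ + t * ⟪u, vC⟫ = t * ‖u‖ ^ 2 := by
      rw [← mul_add, ← mul_add, hsumip]
    have e2 : t ^ 2 * ‖u‖ ^ 2 / (2 * ‖A - P‖) + t ^ 2 * ‖u‖ ^ 2 / (2 * ‖B - P‖)
        + t ^ 2 * ‖u‖ ^ 2 / (2 * ‖C - P‖)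
        = t ^ 2 * (‖u‖ ^ 2 / (2 * ‖A - P‖) + ‖u‖ ^ 2 / (2 * ‖B - P‖)
          + ‖u‖ ^ 2 / (2 * ‖C - P‖)) := by ring
    rw [e1, e2]
    linarith
  have hsum := add_le_add (add_le_add hdA hdB) hdC
  have := hmin (P + t • u)
  linarith

private lemma steiner_cos_val : Real.cos (2 * π / 3) = -(1/2) := by
  have h23 : (2 * π / 3 : ℝ) = π - π / 3 := by ring
  rw [h23, Real.cos_pi_sub, Real.cos_pi_div_three]

private lemma steiner_angle_eq (X Y P : E) (hX : X ≠ P) (hY : Y ≠ P)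
    (h : ⟪‖X - P‖⁻¹ • (X - P), ‖Y - P‖⁻¹ • (Y - P)⟫ = -(1/2)) :
    EuclideanGeometry.angle X P Y = 2 * π / 3 := by
  have hpi : (0:ℝ) < π := Real.pi_pos
  have hrX : 0 < ‖X - P‖ := norm_pos_iff.mpr (sub_ne_zero.mpr hX)
  have hrY : 0 < ‖Y - P‖ := norm_pos_iff.mpr (sub_ne_zero.mpr hY)
  rw [real_inner_smul_left, real_inner_smul_right] at h
  have hcos : Real.cos (EuclideanGeometry.angle X P Y) = -(1/2) := by
    rw [EuclideanGeometry.angle, show (X -ᵥ P : E) = X - P from rfl,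
      show (Y -ᵥ P : E) = Y - P from rfl, InnerProductGeometry.cos_angle]
    field_simp at h ⊢
    linarith
  exact Real.injOn_cos
    ⟨EuclideanGeometry.angle_nonneg _ _ _, EuclideanGeometry.angle_le_pi _ _ _⟩
    ⟨by positivity, by linarith⟩ (by rw [hcos, steiner_cos_val])

end main

set_option maxHeartbeats 1000000 in
theorem stmt12_steiner_acute (A B C : EuclideanSpace ℝ (Fin 2))
    (hABC : AffineIndependent ℝ ![A, B, C])
    (hA : ∠ B A C < 2 * π / 3) (hB : ∠ A B C < 2 * π / 3)
    (hC : ∠ A C B < 2 * π / 3) :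
    ∃ P : EuclideanSpace ℝ (Fin 2),
      (∀ Q : EuclideanSpace ℝ (Fin 2),
        dist A P + dist B P + dist C P ≤ dist A Q + dist B Q + dist C Q) ∧
      ∠ A P B = 2 * π / 3 ∧ ∠ B P C = 2 * π / 3 ∧ ∠ A P C = 2 * π / 3 ∧
      ∀ P' : EuclideanSpace ℝ (Fin 2),
        (∀ Q : EuclideanSpace ℝ (Fin 2),
          dist A P' + dist B P' + dist C P' ≤ dist A Q + dist B Q + dist C Q) →
        P' = P := by
  classical
  have hinj := hABC.injective
  have hAB : A ≠ B := by
    intro h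
    exact (by decide : ¬(0:Fin 3) = 1) (hinj (show ![A,B,C] 0 = ![A,B,C] 1 by simp [h]))
  have hAC : A ≠ C := by
    intro h
    exact (by decide : ¬(0:Fin 3) = 2) (hinj (show ![A,B,C] 0 = ![A,B,C] 2 by simp [h]))
  have hBC : B ≠ C := by
    intro h
    exact (by decide : ¬(1:Fin 3) = 2) (hinj (show ![A,B,C] 1 = ![A,B,C] 2 by simp [h]))
  -- existence of a minimizer
  have hcont : Continuous (fun Q : EuclideanSpace ℝ (Fin 2) =>
      dist A Q + dist B Q + dist C Q) := by fun_prop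
  have hco : Filter.Tendsto (fun Q : EuclideanSpace ℝ (Fin 2) =>
      dist A Q + dist B Q + dist C Q) (Filter.cocompact _) Filter.atTop := by
    apply Filter.tendsto_atTop_mono _ (tendsto_dist_left_cocompact_atTop A)
    intro Q
    have h1 : (0:ℝ) ≤ dist B Q := dist_nonneg
    have h2 : (0:ℝ) ≤ dist C Q := dist_nonneg
    show dist A Q ≤ dist A Q + dist B Q + dist C Q
    linarith
  obtain ⟨P, hP0⟩ := hcont.exists_forall_le hco
  have hP : ∀ Q : EuclideanSpace ℝ (Fin 2),
      dist A P + dist B P + dist C P ≤ dist A Q + dist B Q + dist C Q := hP0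
  clear hP0
  -- P is not a vertex
  have hPA : P ≠ A := by
    intro h
    rw [h] at hP
    obtain ⟨Q, hQ⟩ := steiner_not_at_vertex A B C hAB.symm hAC.symm
      (by rw [EuclideanGeometry.angle, show (B -ᵥ A : EuclideanSpace ℝ (Fin 2)) = B - A from rfl,
        show (C -ᵥ A : EuclideanSpace ℝ (Fin 2)) = C - A from rfl] at hA; exact hA)
    have := hP Q
    linarith
  have hPB : P ≠ B := by
    intro h
    rw [h] at hP
    obtain ⟨Q, hQ⟩ := steiner_not_at_vertex B A C hAB hBC.symm
      (by rw [EuclideanGeometry.angle, show (A -ᵥ B : EuclideanSpace ℝ (Fin 2)) = A - B from rfl,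
        show (C -ᵥ B : EuclideanSpace ℝ (Fin 2)) = C - B from rfl] at hB; exact hB)
    have := hP Q
    linarith
  have hPC : P ≠ C := by
    intro h
    rw [h] at hP
    obtain ⟨Q, hQ⟩ := steiner_not_at_vertex C A B hAC hBC
      (by rw [EuclideanGeometry.angle, show (A -ᵥ C : EuclideanSpace ℝ (Fin 2)) = A - C from rfl,
        show (B -ᵥ C : EuclideanSpace ℝ (Fin 2)) = B - C from rfl] at hC; exact hC)
    have := hP Q
    linarith
  have hAP : A ≠ P := hPA.symm
  have hBP : B ≠ P := hPB.symm
  have hCP : C ≠ P := hPC.symm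
  have hrA : 0 < ‖A - P‖ := norm_pos_iff.mpr (sub_ne_zero.mpr hAP)
  have hrB : 0 < ‖B - P‖ := norm_pos_iff.mpr (sub_ne_zero.mpr hBP)
  have hrC : 0 < ‖C - P‖ := norm_pos_iff.mpr (sub_ne_zero.mpr hCP)
  -- the gradient vanishes at P
  have hgrad : ‖A - P‖⁻¹ • (A - P) + ‖B - P‖⁻¹ • (B - P) + ‖C - P‖⁻¹ • (C - P) = 0 := by
    by_contra hs
    exact steiner_grad_zero A B C P hAP hBP hCP hP hs
  -- unit vectors
  obtain ⟨nA, hnAdef⟩ : ∃ v : EuclideanSpace ℝ (Fin 2), ‖A - P‖⁻¹ • (A - P) = v := ⟨_, rfl⟩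
  obtain ⟨nB, hnBdef⟩ : ∃ v : EuclideanSpace ℝ (Fin 2), ‖B - P‖⁻¹ • (B - P) = v := ⟨_, rfl⟩
  obtain ⟨nC, hnCdef⟩ : ∃ v : EuclideanSpace ℝ (Fin 2), ‖C - P‖⁻¹ • (C - P) = v := ⟨_, rfl⟩
  rw [hnAdef, hnBdef, hnCdef] at hgrad
  have hnA : ‖nA‖ = 1 := by
    rw [← hnAdef, norm_smul, norm_inv, norm_norm, inv_mul_cancel₀ hrA.ne']
  have hnB : ‖nB‖ = 1 := by
    rw [← hnBdef, norm_smul, norm_inv, norm_norm, inv_mul_cancel₀ hrB.ne']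
  have hnC : ‖nC‖ = 1 := by
    rw [← hnCdef, norm_smul, norm_inv, norm_norm, inv_mul_cancel₀ hrC.ne']
  -- pairwise inner products are -1/2
  have hipAB : ⟪nA, nB⟫ = -(1/2) := by
    have h1 : nA + nB = -nC := eq_neg_of_add_eq_zero_left hgrad
    have h2 : ‖nA + nB‖ ^ 2 = 1 := by rw [h1, norm_neg, hnC]; norm_num
    rw [norm_add_sq_real, hnA, hnB] at h2
    linarith
  have hipBC : ⟪nB, nC⟫ = -(1/2) := by
    have h1 : nB + nC = -nA := by
      have : nA + (nB + nC) = 0 := by rw [← add_assoc]; exact hgrad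
      exact eq_neg_of_add_eq_zero_right this
    have h2 : ‖nB + nC‖ ^ 2 = 1 := by rw [h1, norm_neg, hnA]; norm_num
    rw [norm_add_sq_real, hnB, hnC] at h2
    linarith
  have hipAC : ⟪nA, nC⟫ = -(1/2) := by
    have h1 : nA + nC = -nB := by
      have : nB + (nA + nC) = 0 := by rw [← hgrad]; abel
      exact eq_neg_of_add_eq_zero_right this
    have h2 : ‖nA + nC‖ ^ 2 = 1 := by rw [h1, norm_neg, hnB]; norm_num
    rw [norm_add_sq_real, hnA, hnC] at h2
    linarith
  refine ⟨P, hP, ?_, ?_, ?_, ?_⟩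
  · exact steiner_angle_eq A B P hAP hBP (by rw [hnAdef, hnBdef]; exact hipAB)
  · exact steiner_angle_eq B C P hBP hCP (by rw [hnBdef, hnCdef]; exact hipBC)
  · exact steiner_angle_eq A C P hAP hCP (by rw [hnAdef, hnCdef]; exact hipAC)
  -- uniqueness
  intro P' hP'
  have hfeq : dist A P' + dist B P' + dist C P' = dist A P + dist B P + dist C P :=
    le_antisymm (hP' P) (hP P')
  -- Cauchy-Schwarz bounds
  have hAn : A - P = ‖A - P‖ • nA := by rw [← hnAdef, smul_inv_smul₀ hrA.ne']
  have hBn : B - P = ‖B - P‖ • nB := by rw [← hnBdef, smul_inv_smul₀ hrB.ne']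
  have hCn : C - P = ‖C - P‖ • nC := by rw [← hnCdef, smul_inv_smul₀ hrC.ne']
  have hCSa : ⟪A - P', nA⟫ ≤ dist A P' := by
    calc ⟪A - P', nA⟫ ≤ ‖A - P'‖ * ‖nA‖ := real_inner_le_norm _ _
      _ = dist A P' := by rw [hnA, mul_one, dist_eq_norm]
  have hCSb : ⟪B - P', nB⟫ ≤ dist B P' := by
    calc ⟪B - P', nB⟫ ≤ ‖B - P'‖ * ‖nB‖ := real_inner_le_norm _ _
      _ = dist B P' := by rw [hnB, mul_one, dist_eq_norm]
  have hCSc : ⟪C - P', nC⟫ ≤ dist C P' := by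
    calc ⟪C - P', nC⟫ ≤ ‖C - P'‖ * ‖nC‖ := real_inner_le_norm _ _
      _ = dist C P' := by rw [hnC, mul_one, dist_eq_norm]
  -- the sum of the inner products equals the minimum value
  have hinnerA : ⟪A - P, nA⟫ = ‖A - P‖ := by
    rw [← hnAdef, real_inner_smul_right, real_inner_self_eq_norm_sq, pow_two,
      ← mul_assoc, inv_mul_cancel₀ hrA.ne', one_mul]
  have hsplitA : ⟪A - P', nA⟫ = ‖A - P‖ + ⟪P - P', nA⟫ := by
    have h1 : A - P' = (A - P) + (P - P') := by abel
    rw [h1, inner_add_left, hinnerA]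
  have hinnerB : ⟪B - P, nB⟫ = ‖B - P‖ := by
    rw [← hnBdef, real_inner_smul_right, real_inner_self_eq_norm_sq, pow_two,
      ← mul_assoc, inv_mul_cancel₀ hrB.ne', one_mul]
  have hsplitB : ⟪B - P', nB⟫ = ‖B - P‖ + ⟪P - P', nB⟫ := by
    have h1 : B - P' = (B - P) + (P - P') := by abel
    rw [h1, inner_add_left, hinnerB]
  have hinnerC : ⟪C - P, nC⟫ = ‖C - P‖ := by
    rw [← hnCdef, real_inner_smul_right, real_inner_self_eq_norm_sq, pow_two,
      ← mul_assoc, inv_mul_cancel₀ hrC.ne', one_mul]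
  have hsplitC : ⟪C - P', nC⟫ = ‖C - P‖ + ⟪P - P', nC⟫ := by
    have h1 : C - P' = (C - P) + (P - P') := by abel
    rw [h1, inner_add_left, hinnerC]
  have hzero : ⟪P - P', nA⟫ + ⟪P - P', nB⟫ + ⟪P - P', nC⟫ = 0 := by
    rw [← inner_add_right, ← inner_add_right, hgrad, inner_zero_right]
  have hsumeq : ⟪A - P', nA⟫ + ⟪B - P', nB⟫ + ⟪C - P', nC⟫
      = dist A P + dist B P + dist C P := by
    rw [hsplitA, hsplitB, hsplitC, dist_eq_norm, dist_eq_norm, dist_eq_norm]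
    linarith
  -- hence each Cauchy-Schwarz inequality is an equality
  have heqA : ⟪A - P', nA⟫ = dist A P' := by linarith [hfeq, hsumeq, hCSa, hCSb, hCSc]
  have heqB : ⟪B - P', nB⟫ = dist B P' := by linarith [hfeq, hsumeq, hCSa, hCSb, hCSc]
  have hdirA : A - P' = ‖A - P'‖ • nA := by
    have h1 : ⟪A - P', nA⟫ = ‖A - P'‖ * ‖nA‖ := by rw [hnA, mul_one, heqA, dist_eq_norm]
    have h2 := inner_eq_norm_mul_iff_real.mp h1
    rwa [hnA, one_smul] at h2
  have hdirB : B - P' = ‖B - P'‖ • nB := by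
    have h1 : ⟪B - P', nB⟫ = ‖B - P'‖ * ‖nB‖ := by rw [hnB, mul_one, heqB, dist_eq_norm]
    have h2 := inner_eq_norm_mul_iff_real.mp h1
    rwa [hnB, one_smul] at h2
  -- conclude P' = P
  have hPP'A : P - P' = (‖A - P'‖ - ‖A - P‖) • nA := by
    have h2 : P - P' = (A - P') - (A - P) := by abel
    rw [h2]
    conv_lhs => rw [hdirA, hAn]
    rw [← sub_smul]
  have hPP'B : P - P' = (‖B - P'‖ - ‖B - P‖) • nB := by
    have h2 : P - P' = (B - P') - (B - P) := by abel
    rw [h2]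
    conv_lhs => rw [hdirB, hBn]
    rw [← sub_smul]
  have hinnA : ⟪nA, P - P'⟫ = ‖A - P'‖ - ‖A - P‖ := by
    rw [hPP'A, real_inner_smul_right, real_inner_self_eq_norm_sq, hnA]; ring
  have hinnA' : ⟪nA, P - P'⟫ = (‖B - P'‖ - ‖B - P‖) * (-(1/2)) := by
    rw [hPP'B, real_inner_smul_right, hipAB]
  have hinnB : ⟪nB, P - P'⟫ = ‖B - P'‖ - ‖B - P‖ := by
    rw [hPP'B, real_inner_smul_right, real_inner_self_eq_norm_sq, hnB]; ring
  have hinnB' : ⟪nB, P - P'⟫ = (‖A - P'‖ - ‖A - P‖) * (-(1/2)) := by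
    rw [hPP'A, real_inner_smul_right, real_inner_comm, hipAB]
  have hα : ‖A - P'‖ - ‖A - P‖ = 0 := by
    have e1 : ‖A - P'‖ - ‖A - P‖ = (‖B - P'‖ - ‖B - P‖) * (-(1/2)) := by
      rw [← hinnA, hinnA']
    have e2 : ‖B - P'‖ - ‖B - P‖ = (‖A - P'‖ - ‖A - P‖) * (-(1/2)) := by
      rw [← hinnB, hinnB']
    linarith [e1, e2]
  have : P - P' = 0 := by rw [hPP'A, hα, zero_smul]
  have := sub_eq_zero.mp this
  exact this.symm
end

section
/- (Steiner's problem, obtuse case) Let A, B, C ∈ ℝ² with the interior angle at C greater than or equal to 2π/3. Then for every point P ∈ ℝ², |AP| + |BP| + |CP| ≥ |AC| + |BC|, i.e., P = C minimizes the sum of distances to A, B, C. -/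
open EuclideanGeometry Real
open scoped RealInnerProductSpace

theorem stmt13_steiner_obtuse (A B C : EuclideanSpace ℝ (Fin 2))
    (hC : 2 * π / 3 ≤ ∠ A C B) :
    ∀ P : EuclideanSpace ℝ (Fin 2),
      dist A C + dist B C ≤ dist A P + dist B P + dist C P := by
  intro P
  have hπ : (0:ℝ) < π := Real.pi_pos
  have hA : A ≠ C := by
    rintro rfl
    rw [EuclideanGeometry.angle, vsub_self, InnerProductGeometry.angle_zero_left] at hC
    nlinarith
  have hB : B ≠ C := by
    rintro rfl
    rw [EuclideanGeometry.angle, vsub_self, InnerProductGeometry.angle_zero_right] at hC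
    nlinarith
  set a : EuclideanSpace ℝ (Fin 2) := A - C with ha
  set b : EuclideanSpace ℝ (Fin 2) := B - C with hb
  set p : EuclideanSpace ℝ (Fin 2) := P - C with hp
  have ha0 : a ≠ 0 := sub_ne_zero.mpr hA
  have hb0 : b ≠ 0 := sub_ne_zero.mpr hB
  have hna : (0:ℝ) < ‖a‖ := norm_pos_iff.mpr ha0
  have hnb : (0:ℝ) < ‖b‖ := norm_pos_iff.mpr hb0
  have hcos : Real.cos (∠ A C B) ≤ -(1/2) := by
    have h1 : ∠ A C B ≤ π := EuclideanGeometry.angle_le_pi A C B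
    have h2 : Real.cos (∠ A C B) ≤ Real.cos (2*π/3) :=
      Real.cos_le_cos_of_nonneg_of_le_pi (by positivity) h1 hC
    have h3 : Real.cos (2*π/3) = -(1/2) := by
      rw [show 2*π/3 = π - π/3 by ring, Real.cos_pi_sub, Real.cos_pi_div_three]
    linarith
  have hang : ∠ A C B = InnerProductGeometry.angle a b := by
    rw [EuclideanGeometry.angle, vsub_eq_sub, vsub_eq_sub]
  have hinner : ⟪a, b⟫ ≤ -(1/2) * (‖a‖ * ‖b‖) := by
    have h := InnerProductGeometry.cos_angle_mul_norm_mul_norm a b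
    rw [← hang] at h
    have : Real.cos (∠ A C B) * (‖a‖ * ‖b‖) ≤ -(1/2) * (‖a‖ * ‖b‖) := by
      apply mul_le_mul_of_nonneg_right hcos (by positivity)
    linarith [h ▸ this]
  set u : EuclideanSpace ℝ (Fin 2) := ‖a‖⁻¹ • a with hu
  set v : EuclideanSpace ℝ (Fin 2) := ‖b‖⁻¹ • b with hv
  have hnu : ‖u‖ = 1 := norm_smul_inv_norm ha0
  have hnv : ‖v‖ = 1 := norm_smul_inv_norm hb0
  have hau : ⟪a, u⟫ = ‖a‖ := by
    rw [hu, real_inner_smul_right, real_inner_self_eq_norm_sq]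
    field_simp
  have hbv : ⟪b, v⟫ = ‖b‖ := by
    rw [hv, real_inner_smul_right, real_inner_self_eq_norm_sq]
    field_simp
  have huv : ⟪u, v⟫ ≤ -(1/2) := by
    rw [hu, hv, real_inner_smul_left, real_inner_smul_right]
    have h1 : ‖a‖⁻¹ * (‖b‖⁻¹ * ⟪a, b⟫) ≤ ‖a‖⁻¹ * (‖b‖⁻¹ * (-(1/2) * (‖a‖ * ‖b‖))) := by
      apply mul_le_mul_of_nonneg_left _ (by positivity)
      apply mul_le_mul_of_nonneg_left hinner (by positivity)
    calc ‖a‖⁻¹ * (‖b‖⁻¹ * ⟪a, b⟫) ≤ ‖a‖⁻¹ * (‖b‖⁻¹ * (-(1/2) * (‖a‖ * ‖b‖))) := h1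
      _ = -(1/2) := by field_simp
  have hsum : ‖u + v‖ ≤ 1 := by
    have hsq : ‖u + v‖^2 ≤ 1 := by
      rw [norm_add_sq_real, hnu, hnv]
      nlinarith
    nlinarith [norm_nonneg (u + v)]
  -- projections
  have h1 : ⟪a - p, u⟫ ≤ ‖a - p‖ := by
    calc ⟪a - p, u⟫ ≤ ‖a - p‖ * ‖u‖ := real_inner_le_norm _ _
      _ = ‖a - p‖ := by rw [hnu, mul_one]
  have h2 : ⟪b - p, v⟫ ≤ ‖b - p‖ := by
    calc ⟪b - p, v⟫ ≤ ‖b - p‖ * ‖v‖ := real_inner_le_norm _ _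
      _ = ‖b - p‖ := by rw [hnv, mul_one]
  have h3 : ⟪p, u + v⟫ ≤ ‖p‖ := by
    calc ⟪p, u + v⟫ ≤ ‖p‖ * ‖u + v‖ := real_inner_le_norm _ _
      _ ≤ ‖p‖ * 1 := mul_le_mul_of_nonneg_left hsum (norm_nonneg _)
      _ = ‖p‖ := mul_one _
  have e1 : ⟪a - p, u⟫ = ‖a‖ - ⟪p, u⟫ := by
    rw [inner_sub_left, hau]
  have e2 : ⟪b - p, v⟫ = ‖b‖ - ⟪p, v⟫ := by
    rw [inner_sub_left, hbv]
  have e3 : ⟪p, u + v⟫ = ⟪p, u⟫ + ⟪p, v⟫ := inner_add_right _ _ _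
  have dAC : dist A C = ‖a‖ := (dist_eq_norm A C)
  have dBC : dist B C = ‖b‖ := (dist_eq_norm B C)
  have dAP : dist A P = ‖a - p‖ := by
    rw [dist_eq_norm]; congr 1; rw [ha, hp]; abel
  have dBP : dist B P = ‖b - p‖ := by
    rw [dist_eq_norm]; congr 1; rw [hb, hp]; abel
  have dCP : dist C P = ‖p‖ := by
    rw [dist_eq_norm, ← norm_neg]; congr 1; rw [hp]; abel
  rw [dAC, dBC, dAP, dBP, dCP]
  linarith
end
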